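/- Let A be a finite-dimensional real Leibniz algebra. For all a, b ∈ A, the conjugation identity e^{ad_a} ∘ ad_b ∘ e^{-ad_a} = ad_{e^{ad_a}(b)} holds as linear maps A → A. -/

import Mathlib

open NormedSpace

section helpers

variable {E : Type*} [NormedAddCommGroup E] [NormedSpace ℝ E] [CompleteSpace E]

/-- `exp` of an endomorphism applied to a vector, as a tsum. -/
lemma exp_clm_apply (M : E →L[ℝ] E) (v : E) :
    NormedSpace.exp M v = ∑' n : ℕ, ((n.factorial : ℝ))⁻¹ • (M ^ n) v := by
  simp only [exp_eq_tsum ℝ]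
  have h := ((ContinuousLinearMap.apply ℝ E v).map_tsum (expSeries_summable' (𝕂 := ℝ) M))
  simpa using h

variable {B : Type*} [NormedRing B] [NormedAlgebra ℝ B] [CompleteSpace B]

lemma mulLeft_pow (T : B) (n : ℕ) : ∀ X : B,
    ((ContinuousLinearMap.mul ℝ B T) ^ n) X = T ^ n * X := by
  induction n with
  | zero => intro X; simp
  | succ n ih =>
    intro X
    rw [pow_succ, ContinuousLinearMap.mul_apply, ContinuousLinearMap.mul_apply', ih,
      ← mul_assoc, ← pow_succ]

lemma mulRight_pow (T : B) (n : ℕ) : ∀ X : B,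
    (((ContinuousLinearMap.mul ℝ B).flip T) ^ n) X = X * T ^ n := by
  induction n with
  | zero => intro X; simp
  | succ n ih =>
    intro X
    rw [pow_succ, ContinuousLinearMap.mul_apply, ContinuousLinearMap.flip_apply,
      ContinuousLinearMap.mul_apply', ih, mul_assoc, ← pow_succ']

lemma exp_mulLeft (T X : B) :
    NormedSpace.exp (ContinuousLinearMap.mul ℝ B T) X = NormedSpace.exp T * X := by
  rw [exp_clm_apply]
  simp only [exp_eq_tsum ℝ]
  have h := ((ContinuousLinearMap.mul ℝ B).flip X).map_tsum (expSeries_summable' (𝕂 := ℝ) T)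
  simp only [ContinuousLinearMap.map_smul, ContinuousLinearMap.flip_apply,
    ContinuousLinearMap.mul_apply'] at h
  rw [h]
  exact tsum_congr fun n => by
    rw [mulLeft_pow]; simp [ContinuousLinearMap.smul_apply]

lemma exp_mulRight (T X : B) :
    NormedSpace.exp ((ContinuousLinearMap.mul ℝ B).flip T) X = X * NormedSpace.exp T := by
  rw [exp_clm_apply]
  simp only [exp_eq_tsum ℝ]
  have h := (ContinuousLinearMap.mul ℝ B X).map_tsum (expSeries_summable' (𝕂 := ℝ) T)
  simp only [ContinuousLinearMap.map_smul, ContinuousLinearMap.mul_apply'] at h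
  rw [h]
  exact tsum_congr fun n => by
    rw [mulRight_pow]

/-- Conjugation by `exp T` is `exp` of `ad T`. -/
lemma exp_conj_eq_exp_ad (T X : B) :
    NormedSpace.exp T * X * NormedSpace.exp (-T) =
      NormedSpace.exp (ContinuousLinearMap.mul ℝ B T - (ContinuousLinearMap.mul ℝ B).flip T) X := by
  have hc : Commute (ContinuousLinearMap.mul ℝ B T)
      (-(ContinuousLinearMap.mul ℝ B).flip T) := by
    apply Commute.neg_right
    ext Y
    simp [mul_assoc]
  have hsub : (ContinuousLinearMap.mul ℝ B T - (ContinuousLinearMap.mul ℝ B).flip T) =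
      ContinuousLinearMap.mul ℝ B T + (-(ContinuousLinearMap.mul ℝ B).flip T) := by
    abel
  have h1 : (-(ContinuousLinearMap.mul ℝ B).flip T) = (ContinuousLinearMap.mul ℝ B).flip (-T) := by
    ext Y; simp
  letI : NormedAlgebra ℚ (B →L[ℝ] B) := NormedAlgebra.restrictScalars ℚ ℝ (B →L[ℝ] B)
  rw [hsub, exp_add_of_commute hc, ContinuousLinearMap.mul_apply, h1, exp_mulRight, exp_mulLeft,
    mul_assoc]

end helpers

set_option maxHeartbeats 1000000 in
set_option synthInstance.maxHeartbeats 400000 in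
/-- `e^{ad_a} ∘ ad_b ∘ e^{-ad_a} = ad_{e^{ad_a}(b)}` in a
finite-dimensional real Leibniz algebra, where `ad_a b = [b,a]`. -/
theorem exp_ad_conj
    {A : Type*} [NormedAddCommGroup A] [NormedSpace ℝ A] [FiniteDimensional ℝ A]
    (br : A →ₗ[ℝ] A →ₗ[ℝ] A)
    (leib : ∀ x y z : A, br (br x y) z = br (br x z) y + br x (br y z))
    (a b : A) :
    NormedSpace.exp (LinearMap.toContinuousLinearMap (br.flip a)) *
        LinearMap.toContinuousLinearMap (br.flip b) *
        NormedSpace.exp (-(LinearMap.toContinuousLinearMap (br.flip a))) =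
      LinearMap.toContinuousLinearMap
        (br.flip (NormedSpace.exp (LinearMap.toContinuousLinearMap (br.flip a)) b)) := by
  letI : NormedRing ((A →L[ℝ] A) →L[ℝ] A →L[ℝ] A) := inferInstance
  set T : A →L[ℝ] A := LinearMap.toContinuousLinearMap (br.flip a) with hT
  set Dl : A →ₗ[ℝ] (A →L[ℝ] A) :=
    { toFun := fun x => LinearMap.toContinuousLinearMap (br.flip x)
      map_add' := fun x y => by ext v; simp
      map_smul' := fun c x => by ext v; simp } with hDl
  set D : A →L[ℝ] (A →L[ℝ] A) := LinearMap.toContinuousLinearMap Dl with hD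
  have hDapp : ∀ x : A, D x = LinearMap.toContinuousLinearMap (br.flip x) := fun x => rfl
  set M : (A →L[ℝ] A) →L[ℝ] (A →L[ℝ] A) :=
    ContinuousLinearMap.mul ℝ (A →L[ℝ] A) T - (ContinuousLinearMap.mul ℝ (A →L[ℝ] A)).flip T
    with hM
  have key : ∀ x : A, M (D x) = D (T x) := by
    intro x
    ext v
    have hl := leib v x a
    simp only [hM, ContinuousLinearMap.sub_apply, ContinuousLinearMap.mul_apply',
      ContinuousLinearMap.flip_apply, ContinuousLinearMap.coe_sub', Pi.sub_apply,
      ContinuousLinearMap.mul_apply, hDapp, LinearMap.coe_toContinuousLinearMap',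
      LinearMap.flip_apply, hT]
    rw [hl]
    abel
  have keyn : ∀ n : ℕ, (M ^ n) (D b) = D ((T ^ n) b) := by
    intro n
    induction n with
    | zero => simp
    | succ n ih =>
      have h1 : (M ^ (n+1)) (D b) = M ((M ^ n) (D b)) := by
        rw [pow_succ', ContinuousLinearMap.mul_apply]
      have h2 : (T ^ (n+1)) b = T ((T ^ n) b) := by
        rw [pow_succ', ContinuousLinearMap.mul_apply]
      rw [h1, h2, ih, key]
  calc NormedSpace.exp T * D b * NormedSpace.exp (-T) = NormedSpace.exp M (D b) := exp_conj_eq_exp_ad T (D b)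
    _ = ∑' n : ℕ, ((n.factorial : ℝ))⁻¹ • (M ^ n) (D b) := exp_clm_apply M (D b)
    _ = ∑' n : ℕ, ((n.factorial : ℝ))⁻¹ • D ((T ^ n) b) := tsum_congr fun n => by rw [keyn]
    _ = D (∑' n : ℕ, ((n.factorial : ℝ))⁻¹ • (T ^ n) b) := by
        rw [D.map_tsum]
        · exact tsum_congr fun n => by rw [D.map_smul]
        · have h := (expSeries_summable' (𝕂 := ℝ) T)
          have h2 := h.map (ContinuousLinearMap.apply ℝ A b)
            (ContinuousLinearMap.apply ℝ A b).continuous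
          exact h2
    _ = D (NormedSpace.exp T b) := by rw [← exp_clm_apply]
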